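/- Let L be a restricted Lie algebra such that every restricted subalgebra of L is a restricted quasi-ideal. Then [L,L] ⊆ L^[p], and L^3 = L^{p+1}; in particular, if L is nilpotent then L has nilpotency class at most 2. -/

import Mathlib

open LieAlgebra Module

section Preamble

variable (F : Type*) [Field F] (L : Type*) [LieRing L] [LieAlgebra F L]

/-- `pm` is a `p`-mapping making the Lie algebra `L` into a restricted Lie algebra. -/
structure IsPMapping (p : ℕ) (pm : L → L) : Prop where
  ad_pow : ∀ x y : L, ⁅pm x, y⁆ = ((LieAlgebra.ad F L x) ^ p) y
  smul_pow : ∀ (c : F) (x : L), pm (c • x) = c ^ p • pm x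
  add_pm : ∀ x y : L, pm (x + y) - pm x - pm y ∈ LieSubalgebra.lieSpan F L {x, y}

variable {L}

/-- A restricted subalgebra: a subalgebra closed under the `p`-mapping. -/
def IsPSub (pm : L → L) (S : LieSubalgebra F L) : Prop := ∀ x ∈ S, pm x ∈ S

/-- The restricted subalgebra generated by a set. -/
def pSpan (pm : L → L) (s : Set L) : LieSubalgebra F L :=
  sInf {S : LieSubalgebra F L | IsPSub F pm S ∧ s ⊆ S}

/-- A maximal restricted subalgebra. -/
def IsMaxPSub (pm : L → L) (M : LieSubalgebra F L) : Prop :=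
  IsPSub F pm M ∧ M ≠ ⊤ ∧ ∀ S : LieSubalgebra F L, IsPSub F pm S → M < S → S = ⊤

/-- `U` is a maximal (restricted) subalgebra of the restricted subalgebra `V`. -/
def IsMaxIn (pm : L → L) (U V : LieSubalgebra F L) : Prop :=
  U < V ∧ ∀ W : LieSubalgebra F L, IsPSub F pm W → U < W → W < V → False

/-- A restricted quasi-ideal. -/
def IsPQuasiIdeal (pm : L → L) (S : LieSubalgebra F L) : Prop :=
  IsPSub F pm S ∧ ∀ H : LieSubalgebra F L, IsPSub F pm H →
    ∀ s ∈ S, ∀ h ∈ H, ⁅s, h⁆ ∈ S.toSubmodule ⊔ H.toSubmodule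

/-- A `p`-nilpotent element. -/
def IsPNilpotentElt (pm : L → L) (x : L) : Prop := ∃ n : ℕ, 0 < n ∧ pm^[n] x = 0

variable (L)

/-- Every restricted subalgebra is an intersection of maximal restricted subalgebras. -/
def DuallyAtomisticP (pm : L → L) : Prop :=
  ∀ S : LieSubalgebra F L, IsPSub F pm S →
    ∃ 𝓜 : Set (LieSubalgebra F L), (∀ M ∈ 𝓜, IsMaxPSub F pm M) ∧ S = sInf 𝓜

/-- Every (ordinary) subalgebra is an intersection of maximal (ordinary) subalgebras. -/
def DuallyAtomistic : Prop :=
  ∀ S : LieSubalgebra F L,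
    ∃ 𝓜 : Set (LieSubalgebra F L),
      (∀ M ∈ 𝓜, M ≠ ⊤ ∧ ∀ S' : LieSubalgebra F L, M < S' → S' = ⊤) ∧ S = sInf 𝓜

/-- An almost abelian Lie algebra: `L = F x ∔ A` with `A` an abelian ideal on which
`ad x` acts as the identity. -/
def IsAlmostAbelian : Prop :=
  ∃ (x : L) (A : LieIdeal F L), IsLieAbelian A ∧ (∀ a ∈ A, ⁅x, a⁆ = a) ∧
    x ∉ A ∧ Submodule.span F {x} ⊔ A.toSubmodule = ⊤

/-- `N` is the nilradical of `L`: the largest nilpotent ideal. -/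
def IsNilradical (N : LieIdeal F L) : Prop :=
  LieModule.IsNilpotent N N ∧ ∀ I : LieIdeal F L, LieModule.IsNilpotent I I → I ≤ N

/-- Upper semimodularity of the lattice of restricted subalgebras. -/
def UpperSemimodularP (pm : L → L) : Prop :=
  ∀ S T : LieSubalgebra F L, IsPSub F pm S → IsPSub F pm T →
    IsMaxIn F pm (S ⊓ T) T → IsMaxIn F pm S (pSpan F pm ((S : Set L) ∪ (T : Set L)))

/-- Lower semimodularity of the lattice of restricted subalgebras. -/
def LowerSemimodularP (pm : L → L) : Prop :=
  ∀ U B : LieSubalgebra F L, IsPSub F pm U → IsPSub F pm B →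
    IsMaxIn F pm U (pSpan F pm ((U : Set L) ∪ (B : Set L))) → IsMaxIn F pm (U ⊓ B) B

/-- `L` is supersolvable: it admits a complete flag of ideals. -/
def IsSupersolvable : Prop :=
  ∃ (n : ℕ) (f : Fin (n + 1) → LieIdeal F L), Monotone f ∧ f 0 = ⊥ ∧ f (Fin.last n) = ⊤ ∧
    ∀ j : Fin (n + 1), Module.finrank F (f j : Submodule F L) = (j : ℕ)

end Preamble


set_option linter.unusedSectionVars false

section Aux

variable {F : Type*} [Field F] {L : Type*} [LieRing L] [LieAlgebra F L]
variable {p : ℕ} [Fact p.Prime] [CharP F p] {pm : L → L}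

lemma pm_zero (hpm : IsPMapping F L p pm) : pm 0 = 0 := by
  have h := hpm.smul_pow 0 0
  simpa [zero_pow (Nat.Prime.ne_zero Fact.out)] using h

lemma ad_pm (hpm : IsPMapping F L p pm) (x : L) :
    LieAlgebra.ad F L (pm x) = (LieAlgebra.ad F L x) ^ p :=
  LinearMap.ext fun y => hpm.ad_pow x y

lemma ad_pm_iter (hpm : IsPMapping F L p pm) (x : L) (k : ℕ) :
    LieAlgebra.ad F L (pm^[k] x) = (LieAlgebra.ad F L x) ^ (p ^ k) := by
  induction k with
  | zero => simp
  | succ k ih =>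
    rw [Function.iterate_succ_apply', ad_pm hpm, ih, ← pow_mul, ← pow_succ]

lemma ad_pow_self (x : L) {n : ℕ} (hn : n ≠ 0) : ((LieAlgebra.ad F L x) ^ n) x = 0 := by
  obtain ⟨m, rfl⟩ := Nat.exists_eq_succ_of_ne_zero hn
  rw [pow_succ, Module.End.mul_apply]
  simp

lemma bracket_pm_iter_self (hpm : IsPMapping F L p pm) (x : L) (j : ℕ) :
    ⁅pm^[j] x, x⁆ = 0 := by
  calc ⁅pm^[j] x, x⁆ = (LieAlgebra.ad F L (pm^[j] x)) x := rfl
    _ = ((LieAlgebra.ad F L x) ^ (p ^ j)) x := by rw [ad_pm_iter hpm]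
    _ = 0 := ad_pow_self x (pow_ne_zero _ (Nat.Prime.ne_zero Fact.out))

lemma bracket_self_pm_iter (hpm : IsPMapping F L p pm) (x : L) (j : ℕ) :
    ⁅x, pm^[j] x⁆ = 0 := by
  rw [← lie_skew, bracket_pm_iter_self hpm, neg_zero]

lemma pm_iter_bracket (hpm : IsPMapping F L p pm) (x : L) (i j : ℕ) :
    ⁅pm^[i] x, pm^[j] x⁆ = 0 := by
  have h1 : ⁅pm^[i] x, pm^[j] x⁆ = ((LieAlgebra.ad F L x) ^ (p ^ i)) (pm^[j] x) := by
    rw [← ad_pm_iter hpm]; rfl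
  have hp : p ^ i ≠ 0 := pow_ne_zero _ (Nat.Prime.ne_zero Fact.out)
  obtain ⟨m, hm⟩ := Nat.exists_eq_succ_of_ne_zero hp
  have h2 : (LieAlgebra.ad F L x) (pm^[j] x) = 0 := by
    simpa [LieAlgebra.ad_apply] using bracket_self_pm_iter hpm x j
  rw [h1, hm, pow_succ, Module.End.mul_apply, h2, map_zero]

/-- The span of the `pm`-iterates of `v` (starting with `v` itself). -/
def Sv (pm : L → L) (v : L) : Submodule F L :=
  Submodule.span F (Set.range fun k : ℕ => pm^[k] v)

/-- The span of the `pm`-iterates of `v`, starting with `pm v`. -/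
def Tv (pm : L → L) (v : L) : Submodule F L :=
  Submodule.span F (Set.range fun k : ℕ => pm^[k + 1] v)

lemma Sv_bracket (hpm : IsPMapping F L p pm) (v : L) {x y : L}
    (hx : x ∈ Sv (F := F) pm v) (hy : y ∈ Sv (F := F) pm v) : ⁅x, y⁆ = 0 := by
  induction hx, hy using Submodule.span_induction₂ with
  | mem_mem a b ha hb =>
    obtain ⟨i, rfl⟩ := ha; obtain ⟨j, rfl⟩ := hb
    exact pm_iter_bracket hpm v i j
  | zero_left b hb => simp
  | zero_right a ha => simp
  | add_left a b c _ _ _ h1 h2 => rw [add_lie, h1, h2, add_zero]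
  | add_right a b c _ _ _ h1 h2 => rw [lie_add, h1, h2, add_zero]
  | smul_left r a b _ _ h1 => rw [smul_lie, h1, smul_zero]
  | smul_right r a b _ _ h1 => rw [lie_smul, h1, smul_zero]

/-- The restricted subalgebra generated by one element, concretely. -/
def SvAlg (hpm : IsPMapping F L p pm) (v : L) : LieSubalgebra F L :=
  { Sv (F := F) pm v with
    lie_mem' := fun hx hy => by
      rw [Sv_bracket hpm v hx hy]; exact (Sv (F := F) pm v).zero_mem }

lemma mem_SvAlg_iff (hpm : IsPMapping F L p pm) (v x : L) :
    x ∈ SvAlg hpm v ↔ x ∈ Sv (F := F) pm v := Iff.rfl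

lemma self_mem_SvAlg (hpm : IsPMapping F L p pm) (v : L) : v ∈ SvAlg hpm v :=
  Submodule.subset_span ⟨0, rfl⟩

lemma SvAlg_isPSub (hpm : IsPMapping F L p pm) (v : L) : IsPSub F pm (SvAlg hpm v) := by
  intro x hx
  induction hx using Submodule.span_induction with
  | mem a ha =>
    obtain ⟨k, rfl⟩ := ha
    refine Submodule.subset_span ⟨k + 1, ?_⟩
    show pm^[k+1] v = pm (pm^[k] v)
    rw [Function.iterate_succ_apply']
  | zero => rw [pm_zero hpm]; exact zero_mem _
  | add a b ha hb iha ihb =>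
    have hsp : LieSubalgebra.lieSpan F L {a, b} ≤ SvAlg hpm v := by
      rw [LieSubalgebra.lieSpan_le]
      rintro z hz
      rcases hz with rfl | rfl
      · exact ha
      · exact hb
    have : pm (a + b) = (pm (a + b) - pm a - pm b) + pm a + pm b := by abel
    rw [this]
    exact add_mem (add_mem (hsp (hpm.add_pm a b)) iha) ihb
  | smul r a ha iha =>
    rw [hpm.smul_pow]
    exact Submodule.smul_mem _ _ iha

lemma Tv_le_Sv (v : L) : Tv (F := F) pm v ≤ Sv (F := F) pm v := by
  apply Submodule.span_le.mpr
  rintro _ ⟨k, rfl⟩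
  exact Submodule.subset_span ⟨k + 1, rfl⟩

lemma Sv_le_span_sup_Tv (v : L) :
    Sv (F := F) pm v ≤ Submodule.span F {v} ⊔ Tv (F := F) pm v := by
  apply Submodule.span_le.mpr
  rintro _ ⟨k, rfl⟩
  cases k with
  | zero => exact Submodule.mem_sup_left (Submodule.subset_span rfl)
  | succ k => exact Submodule.mem_sup_right (Submodule.subset_span ⟨k, rfl⟩)

/-- The restricted subalgebra generated by the image of `pm`. -/
def Palg (F : Type*) [Field F] {L : Type*} [LieRing L] [LieAlgebra F L] (pm : L → L) :
    LieSubalgebra F L := pSpan F pm (Set.range pm)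

lemma mem_pSpan_iff {s : Set L} {x : L} :
    x ∈ pSpan F pm s ↔ ∀ S : LieSubalgebra F L, IsPSub F pm S → s ⊆ S → x ∈ S := by
  constructor
  · intro hx S hS1 hS2
    have hle : pSpan F pm s ≤ S := sInf_le ⟨hS1, hS2⟩
    exact hle hx
  · intro hx
    have : x ∈ (↑(sInf {S : LieSubalgebra F L | IsPSub F pm S ∧ s ⊆ S}) : Set L) := by
      rw [LieSubalgebra.coe_sInf]
      simp only [Set.mem_iInter]
      intro S hS
      exact hx S hS.1 hS.2
    exact this

lemma pm_mem_Palg (x : L) : pm x ∈ Palg F pm := by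
  rw [Palg, mem_pSpan_iff]
  intro S _ hS2
  exact hS2 ⟨x, rfl⟩

lemma Palg_isPSub : IsPSub F pm (Palg F pm) := fun x _ => pm_mem_Palg x

lemma Palg_le {S : LieSubalgebra F L} (h1 : IsPSub F pm S) (h2 : Set.range pm ⊆ S) :
    Palg F pm ≤ S := sInf_le ⟨h1, h2⟩

lemma Tv_le_Palg (v : L) : Tv (F := F) pm v ≤ (Palg F pm).toSubmodule := by
  apply Submodule.span_le.mpr
  rintro _ ⟨k, rfl⟩
  show pm^[k+1] v ∈ Palg F pm
  rw [Function.iterate_succ_apply']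
  exact pm_mem_Palg _

section WithH

variable (h : ∀ S : LieSubalgebra F L, IsPSub F pm S → IsPQuasiIdeal F pm S)

include h in
lemma pair_decomp (hpm : IsPMapping F L p pm) (x u : L) :
    ∃ (a b : F) (z₁ z₂ : L), z₁ ∈ Tv (F := F) pm x ∧ z₂ ∈ Tv (F := F) pm u ∧
      ⁅x, u⁆ = a • x + b • u + z₁ + z₂ := by
  have hq := (h (SvAlg hpm x) (SvAlg_isPSub hpm x)).2 (SvAlg hpm u) (SvAlg_isPSub hpm u)
      x (self_mem_SvAlg hpm x) u (self_mem_SvAlg hpm u)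
  rw [Submodule.mem_sup] at hq
  obtain ⟨y1, hy1, y2, hy2, hsum⟩ := hq
  have h1 := Sv_le_span_sup_Tv (F := F) (pm := pm) x hy1
  have h2 := Sv_le_span_sup_Tv (F := F) (pm := pm) u hy2
  rw [Submodule.mem_sup] at h1 h2
  obtain ⟨s1, hs1, z1, hz1, rfl⟩ := h1
  obtain ⟨s2, hs2, z2, hz2, rfl⟩ := h2
  rw [Submodule.mem_span_singleton] at hs1 hs2
  obtain ⟨a, rfl⟩ := hs1
  obtain ⟨b, rfl⟩ := hs2
  exact ⟨a, b, z1, z2, hz1, hz2, by rw [← hsum]; abel⟩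

include h in
lemma Q1 (hpm : IsPMapping F L p pm) {w : L} (hw : w ∈ Palg F pm) (v : L) :
    ∃ t : F, ⁅w, v⁆ - t • v ∈ (Palg F pm).toSubmodule := by
  have hq := (h (Palg F pm) (Palg_isPSub)).2 (SvAlg hpm v) (SvAlg_isPSub hpm v)
      w hw v (self_mem_SvAlg hpm v)
  rw [Submodule.mem_sup] at hq
  obtain ⟨y1, hy1, y2, hy2, hsum⟩ := hq
  have h2 := Sv_le_span_sup_Tv (F := F) (pm := pm) v hy2
  rw [Submodule.mem_sup] at h2
  obtain ⟨s1, hs1, z2, hz2, rfl⟩ := h2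
  rw [Submodule.mem_span_singleton] at hs1
  obtain ⟨t, rfl⟩ := hs1
  refine ⟨t, ?_⟩
  have : ⁅w, v⁆ - t • v = y1 + z2 := by rw [← hsum]; abel
  rw [this]
  exact Submodule.add_mem _ hy1 (Tv_le_Palg v hz2)

end WithH

lemma scal_eq_zero {v₀ : L} (hv₀ : v₀ ∉ Palg F pm) {a : F}
    (ha : a • v₀ ∈ (Palg F pm).toSubmodule) : a = 0 := by
  by_contra hne
  refine hv₀ ?_
  have := Submodule.smul_mem (Palg F pm).toSubmodule a⁻¹ ha
  rwa [smul_smul, inv_mul_cancel₀ hne, one_smul] at this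

open scoped Classical in
noncomputable def cf (F : Type*) [Field F] {L : Type*} [LieRing L] [LieAlgebra F L]
    (pm : L → L) (v₀ w : L) : F :=
  if h : ∃ t : F, ⁅w, v₀⁆ - t • v₀ ∈ (Palg F pm).toSubmodule then h.choose else 0

lemma cf_spec_of_ex {v₀ w : L} (hex : ∃ t : F, ⁅w, v₀⁆ - t • v₀ ∈ (Palg F pm).toSubmodule) :
    ⁅w, v₀⁆ - cf F pm v₀ w • v₀ ∈ (Palg F pm).toSubmodule := by
  classical
  rw [cf, dif_pos hex]
  exact hex.choose_spec

lemma cf_unique {v₀ : L} (hv₀ : v₀ ∉ Palg F pm) {w : L} {t : F}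
    (ht : ⁅w, v₀⁆ - t • v₀ ∈ (Palg F pm).toSubmodule) : cf F pm v₀ w = t := by
  have hspec := cf_spec_of_ex (pm := pm) ⟨t, ht⟩
  have hdiff : (t - cf F pm v₀ w) • v₀ ∈ (Palg F pm).toSubmodule := by
    have := Submodule.sub_mem _ hspec ht
    have e : ⁅w, v₀⁆ - cf F pm v₀ w • v₀ - (⁅w, v₀⁆ - t • v₀) = (t - cf F pm v₀ w) • v₀ := by
      rw [sub_smul]; abel
    rwa [e] at this
  have h0 := scal_eq_zero hv₀ hdiff
  exact (sub_eq_zero.mp h0).symm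

section Part1

variable (hpm : IsPMapping F L p pm)
variable (h : ∀ S : LieSubalgebra F L, IsPSub F pm S → IsPQuasiIdeal F pm S)
variable {v₀ : L} (hv₀ : v₀ ∉ Palg F pm)

include hpm h hv₀ in
lemma cf_char {w : L} (hw : w ∈ Palg F pm) (v : L) :
    ⁅w, v⁆ - cf F pm v₀ w • v ∈ (Palg F pm).toSubmodule := by
  have hspec : ⁅w, v₀⁆ - cf F pm v₀ w • v₀ ∈ (Palg F pm).toSubmodule :=
    cf_spec_of_ex (Q1 h hpm hw v₀)
  by_cases hv : v ∈ Palg F pm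
  · exact Submodule.sub_mem _ ((Palg F pm).lie_mem hw hv) (Submodule.smul_mem _ _ hv)
  by_cases hd : ∃ a : F, v - a • v₀ ∈ (Palg F pm).toSubmodule
  · obtain ⟨a, ha⟩ := hd
    have e : ⁅w, v⁆ - cf F pm v₀ w • v =
        ⁅w, v - a • v₀⁆ + a • (⁅w, v₀⁆ - cf F pm v₀ w • v₀)
          - cf F pm v₀ w • (v - a • v₀) := by
      simp only [lie_sub, lie_smul, smul_sub, smul_smul]
      module
    rw [e]
    refine Submodule.sub_mem _ (Submodule.add_mem _ ?_ (Submodule.smul_mem _ _ hspec))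
      (Submodule.smul_mem _ _ ha)
    exact (Palg F pm).lie_mem hw ha
  · obtain ⟨t, ht⟩ := Q1 h hpm hw v
    obtain ⟨s, hs⟩ := Q1 h hpm hw (v + v₀)
    have hkey : (s - t) • v + (s - cf F pm v₀ w) • v₀ ∈ (Palg F pm).toSubmodule := by
      have := Submodule.sub_mem _ (Submodule.add_mem _ ht hspec) hs
      have e : ⁅w, v⁆ - t • v + (⁅w, v₀⁆ - cf F pm v₀ w • v₀) - (⁅w, v + v₀⁆ - s • (v + v₀))
          = (s - t) • v + (s - cf F pm v₀ w) • v₀ := by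
        simp only [lie_add, sub_smul, smul_add]
        module
      rwa [e] at this
    have hst : s - t = 0 := by
      by_contra hne
      refine hd ⟨-((s - cf F pm v₀ w) / (s - t)), ?_⟩
      have := Submodule.smul_mem (Palg F pm).toSubmodule (s - t)⁻¹ hkey
      have e : (s - t)⁻¹ • ((s - t) • v + (s - cf F pm v₀ w) • v₀)
          = v - -((s - cf F pm v₀ w) / (s - t)) • v₀ := by
        rw [smul_add, smul_smul, smul_smul, inv_mul_cancel₀ hne, one_smul]
        rw [div_eq_inv_mul, neg_smul, sub_neg_eq_add, mul_comm]
      rwa [e] at this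
    have hs_eq : s = t := sub_eq_zero.mp hst
    have hcf : s - cf F pm v₀ w = 0 := by
      apply scal_eq_zero hv₀
      have e : (s - t) • v + (s - cf F pm v₀ w) • v₀ = (s - cf F pm v₀ w) • v₀ := by
        rw [hst, zero_smul, zero_add]
      rwa [e] at hkey
    have : cf F pm v₀ w = t := by
      have := sub_eq_zero.mp hcf
      rw [← this, hs_eq]
    rwa [this]

end Part1

section Part1

variable (hpm : IsPMapping F L p pm)
variable (h : ∀ S : LieSubalgebra F L, IsPSub F pm S → IsPQuasiIdeal F pm S)
variable {v₀ : L} (hv₀ : v₀ ∉ Palg F pm)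

include hpm h hv₀

lemma cf_zero' : cf F pm v₀ (0 : L) = 0 := by
  apply cf_unique hv₀
  simp

lemma cf_add {w w' : L} (hw : w ∈ Palg F pm) (hw' : w' ∈ Palg F pm) :
    cf F pm v₀ (w + w') = cf F pm v₀ w + cf F pm v₀ w' := by
  apply cf_unique hv₀
  have e : ⁅w + w', v₀⁆ - (cf F pm v₀ w + cf F pm v₀ w') • v₀ =
      (⁅w, v₀⁆ - cf F pm v₀ w • v₀) + (⁅w', v₀⁆ - cf F pm v₀ w' • v₀) := by
    rw [add_lie, add_smul]; abel
  rw [e]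
  exact Submodule.add_mem _ (cf_char hpm h hv₀ hw v₀) (cf_char hpm h hv₀ hw' v₀)

lemma cf_smul (t : F) {w : L} (hw : w ∈ Palg F pm) :
    cf F pm v₀ (t • w) = t * cf F pm v₀ w := by
  apply cf_unique hv₀
  have e : ⁅t • w, v₀⁆ - (t * cf F pm v₀ w) • v₀ = t • (⁅w, v₀⁆ - cf F pm v₀ w • v₀) := by
    rw [smul_lie, mul_smul, smul_sub]
  rw [e]
  exact Submodule.smul_mem _ _ (cf_char hpm h hv₀ hw v₀)

lemma cf_mul_aux {w w' : L} (hw : w ∈ Palg F pm) (hw' : w' ∈ Palg F pm) (v : L) :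
    ⁅w, ⁅w', v⁆⁆ - (cf F pm v₀ w * cf F pm v₀ w') • v ∈ (Palg F pm).toSubmodule := by
  have e : ⁅w, ⁅w', v⁆⁆ - (cf F pm v₀ w * cf F pm v₀ w') • v =
      ⁅w, ⁅w', v⁆ - cf F pm v₀ w' • v⁆ + cf F pm v₀ w' • (⁅w, v⁆ - cf F pm v₀ w • v) := by
    simp only [lie_sub, lie_smul, smul_sub, smul_smul]
    module
  rw [e]
  exact Submodule.add_mem _ ((Palg F pm).lie_mem hw (cf_char hpm h hv₀ hw' v))
    (Submodule.smul_mem _ _ (cf_char hpm h hv₀ hw v))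

lemma cf_bracket {w w' : L} (hw : w ∈ Palg F pm) (hw' : w' ∈ Palg F pm) :
    cf F pm v₀ ⁅w, w'⁆ = 0 := by
  apply cf_unique hv₀
  have e : ⁅⁅w, w'⁆, v₀⁆ - (0 : F) • v₀ =
      (⁅w, ⁅w', v₀⁆⁆ - (cf F pm v₀ w * cf F pm v₀ w') • v₀)
        - (⁅w', ⁅w, v₀⁆⁆ - (cf F pm v₀ w' * cf F pm v₀ w) • v₀) := by
    rw [lie_lie]
    rw [mul_comm (cf F pm v₀ w') (cf F pm v₀ w)]
    simp only [zero_smul, sub_zero]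
    abel
  rw [e]
  exact Submodule.sub_mem _ (cf_mul_aux hpm h hv₀ hw hw' v₀) (cf_mul_aux hpm h hv₀ hw' hw v₀)

lemma cf_iter (k : ℕ) {w : L} (hw : w ∈ Palg F pm) (v : L) :
    ((LieAlgebra.ad F L w) ^ k) v - (cf F pm v₀ w) ^ k • v ∈ (Palg F pm).toSubmodule := by
  induction k with
  | zero => simp
  | succ k ih =>
    have e : ((LieAlgebra.ad F L w) ^ (k + 1)) v - (cf F pm v₀ w) ^ (k + 1) • v =
        ⁅w, ((LieAlgebra.ad F L w) ^ k) v - (cf F pm v₀ w) ^ k • v⁆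
          + (cf F pm v₀ w) ^ k • (⁅w, v⁆ - cf F pm v₀ w • v) := by
      rw [pow_succ', Module.End.mul_apply]
      simp only [lie_sub, lie_smul, smul_sub, smul_smul, LieAlgebra.ad_apply]
      rw [pow_succ]
      module
    rw [e]
    exact Submodule.add_mem _ ((Palg F pm).lie_mem hw ih)
      (Submodule.smul_mem _ _ (cf_char hpm h hv₀ hw v))

lemma cf_pm {w : L} (hw : w ∈ Palg F pm) :
    cf F pm v₀ (pm w) = (cf F pm v₀ w) ^ p := by
  apply cf_unique hv₀
  rw [hpm.ad_pow]
  exact cf_iter hpm h hv₀ p hw v₀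

lemma cf_pm_not {v : L} (hv : v ∉ Palg F pm) : cf F pm v₀ (pm v) = 0 := by
  have h1 := cf_char hpm h hv₀ (pm_mem_Palg v) v
  have h2 : ⁅pm v, v⁆ = 0 := by
    rw [hpm.ad_pow]
    exact ad_pow_self v (Nat.Prime.ne_zero Fact.out)
  rw [h2, zero_sub] at h1
  have h3 : cf F pm v₀ (pm v) • v ∈ (Palg F pm).toSubmodule := by
    simpa using Submodule.neg_mem _ h1
  exact scal_eq_zero hv h3

lemma cf_pm_iter_not {v : L} (hv : v ∉ Palg F pm) (i : ℕ) :
    cf F pm v₀ (pm^[i + 1] v) = 0 := by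
  induction i with
  | zero => simpa using cf_pm_not hpm h hv₀ hv
  | succ i ih =>
    have e : pm^[i + 2] v = pm (pm^[i + 1] v) := Function.iterate_succ_apply' pm (i + 1) v
    have hmem : pm^[i + 1] v ∈ Palg F pm := by
      rw [Function.iterate_succ_apply']
      exact pm_mem_Palg _
    rw [e, cf_pm hpm h hv₀ hmem, ih, zero_pow (Nat.Prime.ne_zero Fact.out)]

lemma Tv_mem_ker {v : L} (hv : v ∉ Palg F pm) {z : L} (hz : z ∈ Tv (F := F) pm v) :
    z ∈ Palg F pm ∧ cf F pm v₀ z = 0 := by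
  induction hz using Submodule.span_induction with
  | mem a ha =>
    obtain ⟨k, rfl⟩ := ha
    exact ⟨Tv_le_Palg v (Submodule.subset_span ⟨k, rfl⟩), cf_pm_iter_not hpm h hv₀ hv k⟩
  | zero => exact ⟨zero_mem _, cf_zero' hpm h hv₀⟩
  | add a b _ _ iha ihb =>
    exact ⟨add_mem iha.1 ihb.1, by rw [cf_add hpm h hv₀ iha.1 ihb.1, iha.2, ihb.2, add_zero]⟩
  | smul t a _ iha =>
    exact ⟨Submodule.smul_mem _ _ iha.1, by rw [cf_smul hpm h hv₀ t iha.1, iha.2, mul_zero]⟩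

end Part1

section Part1b

variable (hpm : IsPMapping F L p pm)
variable (h : ∀ S : LieSubalgebra F L, IsPSub F pm S → IsPQuasiIdeal F pm S)
variable {v₀ : L} (hv₀ : v₀ ∉ Palg F pm)

include hpm h hv₀ in
lemma cf_sub {w w' : L} (hw : w ∈ Palg F pm) (hw' : w' ∈ Palg F pm) :
    cf F pm v₀ (w - w') = cf F pm v₀ w - cf F pm v₀ w' := by
  rw [sub_eq_add_neg, ← neg_one_smul F w', cf_add hpm h hv₀ hw (Submodule.smul_mem _ _ hw'),
    cf_smul hpm h hv₀ (-1) hw']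
  ring

/-- The kernel of `cf` inside `P`, as a submodule. -/
noncomputable def KsSub (hpm : IsPMapping F L p pm)
    (h : ∀ S : LieSubalgebra F L, IsPSub F pm S → IsPQuasiIdeal F pm S)
    {v₀ : L} (hv₀ : v₀ ∉ Palg F pm) : Submodule F L where
  carrier := {z | z ∈ Palg F pm ∧ cf F pm v₀ z = 0}
  zero_mem' := ⟨zero_mem _, cf_zero' hpm h hv₀⟩
  add_mem' := fun ha hb => ⟨add_mem ha.1 hb.1,
    by rw [cf_add hpm h hv₀ ha.1 hb.1, ha.2, hb.2, add_zero]⟩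
  smul_mem' := fun t x hx => ⟨Submodule.smul_mem _ _ hx.1,
    by rw [cf_smul hpm h hv₀ t hx.1, hx.2, mul_zero]⟩

/-- The kernel of `cf` inside `P`, as a Lie subalgebra. -/
noncomputable def KsAlg (hpm : IsPMapping F L p pm)
    (h : ∀ S : LieSubalgebra F L, IsPSub F pm S → IsPQuasiIdeal F pm S)
    {v₀ : L} (hv₀ : v₀ ∉ Palg F pm) : LieSubalgebra F L :=
  { KsSub hpm h hv₀ with
    lie_mem' := fun {x y} hx hy => ⟨(Palg F pm).lie_mem hx.1 hy.1,
      cf_bracket hpm h hv₀ hx.1 hy.1⟩ }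

lemma mem_KsAlg {z : L} :
    z ∈ KsAlg hpm h hv₀ ↔ z ∈ Palg F pm ∧ cf F pm v₀ z = 0 := Iff.rfl

include hpm h hv₀

lemma KsAlg_isPSub : IsPSub F pm (KsAlg hpm h hv₀) := by
  intro z hz
  rw [mem_KsAlg] at hz ⊢
  exact ⟨pm_mem_Palg z, by rw [cf_pm hpm h hv₀ hz.1, hz.2, zero_pow (Nat.Prime.ne_zero Fact.out)]⟩

lemma KsAlg_ideal {z : L} (hz : z ∈ KsAlg hpm h hv₀) (v : L) :
    ⁅z, v⁆ ∈ KsAlg hpm h hv₀ := by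
  by_cases hv : v ∈ Palg F pm
  · exact (mem_KsAlg hpm h hv₀).mpr ⟨(Palg F pm).lie_mem hz.1 hv,
      cf_bracket hpm h hv₀ hz.1 hv⟩
  · have hq := (h (KsAlg hpm h hv₀) (KsAlg_isPSub hpm h hv₀)).2 (SvAlg hpm v)
      (SvAlg_isPSub hpm v) z hz v (self_mem_SvAlg hpm v)
    rw [Submodule.mem_sup] at hq
    obtain ⟨k', hk', y2, hy2, hsum⟩ := hq
    have h2 := Sv_le_span_sup_Tv (F := F) (pm := pm) v hy2
    rw [Submodule.mem_sup] at h2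
    obtain ⟨s1, hs1, z2, hz2, rfl⟩ := h2
    rw [Submodule.mem_span_singleton] at hs1
    obtain ⟨t, rfl⟩ := hs1
    have hz2K : z2 ∈ KsAlg hpm h hv₀ :=
      (mem_KsAlg hpm h hv₀).mpr (Tv_mem_ker hpm h hv₀ hv hz2)
    have hzvP : ⁅z, v⁆ ∈ (Palg F pm).toSubmodule := by
      have h3 := cf_char hpm h hv₀ hz.1 v
      rw [((mem_KsAlg hpm h hv₀).mp hz).2, zero_smul, sub_zero] at h3
      exact h3
    have htv : t • v ∈ (Palg F pm).toSubmodule := by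
      have e : t • v = ⁅z, v⁆ - k' - z2 := by rw [← hsum]; abel
      rw [e]
      exact Submodule.sub_mem _ (Submodule.sub_mem _ hzvP hk'.1) hz2K.1
    have ht0 : t = 0 := scal_eq_zero hv htv
    have e2 : ⁅z, v⁆ = k' + z2 := by rw [← hsum, ht0, zero_smul]; abel
    rw [e2]
    exact add_mem hk' hz2K

lemma KsAlg_ideal' {z : L} (hz : z ∈ KsAlg hpm h hv₀) (v : L) :
    ⁅v, z⁆ ∈ KsAlg hpm h hv₀ := by
  rw [← lie_skew]
  exact neg_mem (KsAlg_ideal hpm h hv₀ hz v)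

end Part1b

section Part1c

variable (hpm : IsPMapping F L p pm)
variable (h : ∀ S : LieSubalgebra F L, IsPSub F pm S → IsPQuasiIdeal F pm S)
variable {v₀ : L} (hv₀ : v₀ ∉ Palg F pm)

include hpm h hv₀

/-- Step B: if `cf q = 1` for `q ∈ P`, then for `v ∉ P` the error `⁅q,v⁆ - v` lies in `K`. -/
lemma zv_mem_Ks {q : L} (hq : q ∈ Palg F pm) (hcq : cf F pm v₀ q = 1)
    {v : L} (hv : v ∉ Palg F pm) : ⁅q, v⁆ - v ∈ KsAlg hpm h hv₀ := by
  have hzvP : ⁅q, v⁆ - v ∈ (Palg F pm).toSubmodule := by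
    have := cf_char hpm h hv₀ hq v
    rwa [hcq, one_smul] at this
  set α := cf F pm v₀ (⁅q, v⁆ - v) with hα
  -- the base point: zv v - α • q ∈ Ks
  have hbase : ⁅q, v⁆ - v - α • q ∈ KsAlg hpm h hv₀ := by
    refine (mem_KsAlg hpm h hv₀).mpr ⟨Submodule.sub_mem _ hzvP (Submodule.smul_mem _ _ hq), ?_⟩
    rw [cf_sub hpm h hv₀ hzvP (Submodule.smul_mem _ _ hq), cf_smul hpm h hv₀ α hq, hcq, ← hα]
    ring
  -- main induction on iterates of ad v applied to q
  have hiter : ∀ k : ℕ, ((LieAlgebra.ad F L v) ^ (k + 1)) q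
      - ((-1 : F) ^ (k + 1) * α ^ k) • (v + α • q) ∈ KsAlg hpm h hv₀ := by
    intro k
    induction k with
    | zero =>
      have e : ((LieAlgebra.ad F L v) ^ 1) q - ((-1 : F) ^ 1 * α ^ 0) • (v + α • q)
          = -(⁅q, v⁆ - v - α • q) := by
        simp only [pow_one, pow_zero, mul_one, neg_one_smul, LieAlgebra.ad_apply]
        rw [← lie_skew v q]
        module
      rw [e]
      exact neg_mem hbase
    | succ k ih =>
      set ε := ((-1 : F) ^ (k + 1) * α ^ k) with hε
      set X := ((LieAlgebra.ad F L v) ^ (k + 1)) q - ε • (v + α • q) with hX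
      have hvX : ⁅v, X⁆ ∈ KsAlg hpm h hv₀ := KsAlg_ideal' hpm h hv₀ ih v
      have e : ((LieAlgebra.ad F L v) ^ (k + 1 + 1)) q
          - ((-1 : F) ^ (k + 1 + 1) * α ^ (k + 1)) • (v + α • q)
          = ⁅v, X⁆ - (ε * α) • (⁅q, v⁆ - v - α • q) := by
        rw [pow_succ', Module.End.mul_apply]
        rw [hX]
        simp only [lie_sub, lie_smul, lie_add, lie_self, smul_add, smul_smul,
          LieAlgebra.ad_apply, zero_add, smul_zero, add_zero]
        rw [← lie_skew v q, hε]
        ring_nf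
        module
      rw [e]
      exact sub_mem hvX (Submodule.smul_mem (KsSub hpm h hv₀) _ hbase)
  -- apply with k + 1 = p
  have hp1 : p - 1 + 1 = p := Nat.succ_pred_eq_of_pos (Nat.Prime.pos (Fact.out : p.Prime))
  have hfin : ((LieAlgebra.ad F L v) ^ p) q - ((-1 : F) ^ p * α ^ (p - 1)) • (v + α • q)
      ∈ KsAlg hpm h hv₀ := by
    have h2 := hiter (p - 1)
    rwa [hp1] at h2
  have hpmvK : pm v ∈ KsAlg hpm h hv₀ :=
    (mem_KsAlg hpm h hv₀).mpr ⟨pm_mem_Palg v, cf_pm_not hpm h hv₀ hv⟩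
  have hbrK : ((LieAlgebra.ad F L v) ^ p) q ∈ KsAlg hpm h hv₀ := by
    rw [← hpm.ad_pow]
    exact KsAlg_ideal hpm h hv₀ hpmvK q
  have hsc : ((-1 : F) ^ p * α ^ (p - 1)) • (v + α • q) ∈ KsAlg hpm h hv₀ := by
    have := sub_mem hbrK hfin
    simpa using this
  -- show α = 0
  have hα0 : α = 0 := by
    by_contra hαne
    have hne : ((-1 : F) ^ p * α ^ (p - 1)) ≠ 0 := by
      apply mul_ne_zero
      · exact pow_ne_zero _ (by norm_num)
      · exact pow_ne_zero _ hαne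
    have hvq : v + α • q ∈ KsAlg hpm h hv₀ := by
      have := Submodule.smul_mem (KsSub hpm h hv₀) ((-1 : F) ^ p * α ^ (p - 1))⁻¹ hsc
      rwa [smul_smul, inv_mul_cancel₀ hne, one_smul] at this
    have : v ∈ (Palg F pm).toSubmodule := by
      have e : v = (v + α • q) - α • q := by abel
      rw [e]
      exact Submodule.sub_mem _ hvq.1 (Submodule.smul_mem _ _ hq)
    exact hv this
  rw [hα0, zero_smul, sub_zero] at hbase
  exact hbase

/-- Step C: if `cf q = 1` is possible, brackets of elements outside `P` land in `K`. -/
lemma bracket_mem_Ks {q : L} (hq : q ∈ Palg F pm) (hcq : cf F pm v₀ q = 1)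
    {v v' : L} (hv : v ∉ Palg F pm) (hv' : v' ∉ Palg F pm) :
    ⁅v, v'⁆ ∈ KsAlg hpm h hv₀ := by
  obtain ⟨a, b, z1, z2, hz1, hz2, hdec⟩ := pair_decomp h hpm v v'
  have hz1K : z1 ∈ KsAlg hpm h hv₀ := (mem_KsAlg hpm h hv₀).mpr (Tv_mem_ker hpm h hv₀ hv hz1)
  have hz2K : z2 ∈ KsAlg hpm h hv₀ := (mem_KsAlg hpm h hv₀).mpr (Tv_mem_ker hpm h hv₀ hv' hz2)
  have hqv := zv_mem_Ks hpm h hv₀ hq hcq hv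
  have hqv' := zv_mem_Ks hpm h hv₀ hq hcq hv'
  -- (i) : ⁅q, ⁅v,v'⁆⁆ - (a • v + b • v') ∈ Ks
  have hi : ⁅q, ⁅v, v'⁆⁆ - (a • v + b • v') ∈ KsAlg hpm h hv₀ := by
    have e : ⁅q, ⁅v, v'⁆⁆ - (a • v + b • v')
        = a • (⁅q, v⁆ - v) + b • (⁅q, v'⁆ - v') + ⁅q, z1 + z2⁆ := by
      conv_lhs => rw [hdec]
      simp only [lie_add, lie_smul, smul_sub]
      abel
    rw [e]
    exact add_mem (add_mem (Submodule.smul_mem (KsSub hpm h hv₀) _ hqv)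
      (Submodule.smul_mem (KsSub hpm h hv₀) _ hqv'))
      (KsAlg_ideal' hpm h hv₀ (add_mem hz1K hz2K) q)
  -- (ii) : ⁅q, ⁅v,v'⁆⁆ - 2 • ⁅v,v'⁆ ∈ Ks
  have hii : ⁅q, ⁅v, v'⁆⁆ - (2 : F) • ⁅v, v'⁆ ∈ KsAlg hpm h hv₀ := by
    have e : ⁅q, ⁅v, v'⁆⁆ - (2 : F) • ⁅v, v'⁆
        = ⁅⁅q, v⁆ - v, v'⁆ + ⁅v, ⁅q, v'⁆ - v'⁆ := by
      rw [leibniz_lie q v v']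
      simp only [sub_lie, lie_sub, two_smul]
      module
    rw [e]
    exact add_mem (KsAlg_ideal hpm h hv₀ hqv v') (KsAlg_ideal' hpm h hv₀ hqv' v)
  -- combine
  have hk : ⁅v, v'⁆ - (a • v + b • v') ∈ KsAlg hpm h hv₀ := by
    have e : ⁅v, v'⁆ - (a • v + b • v') = z1 + z2 := by rw [hdec]; abel
    rw [e]; exact add_mem hz1K hz2K
  have e2 : ⁅v, v'⁆ = (⁅q, ⁅v, v'⁆⁆ - (a • v + b • v'))
      - (⁅q, ⁅v, v'⁆⁆ - (2 : F) • ⁅v, v'⁆) - (⁅v, v'⁆ - (a • v + b • v')) := by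
    rw [two_smul]; abel
  rw [e2]
  exact sub_mem (sub_mem hi hii) hk

/-- Stage 1 conclusion: `cf` vanishes identically on `P`. -/
lemma cf_eq_zero {w : L} (hw : w ∈ Palg F pm) : cf F pm v₀ w = 0 := by
  by_contra hcw
  set q := (cf F pm v₀ w)⁻¹ • w with hqdef
  have hqP : q ∈ Palg F pm := Submodule.smul_mem (Palg F pm).toSubmodule _ hw
  have hcq : cf F pm v₀ q = 1 := by
    rw [hqdef, cf_smul hpm h hv₀ _ hw, inv_mul_cancel₀ hcw]
  have hqv₀ : q + v₀ ∉ Palg F pm := by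
    intro hmem
    refine hv₀ ?_
    have e : v₀ = (q + v₀) - q := by abel
    rw [e]
    exact Submodule.sub_mem (Palg F pm).toSubmodule hmem hqP
  have hbr := bracket_mem_Ks hpm h hv₀ hqP hcq hqv₀ hv₀
  have e : ⁅q + v₀, v₀⁆ = ⁅q, v₀⁆ := by simp
  rw [e] at hbr
  have hzv := zv_mem_Ks hpm h hv₀ hqP hcq hv₀
  have hv₀K : v₀ ∈ KsAlg hpm h hv₀ := by
    have := sub_mem hbr hzv
    simpa using this
  exact hv₀ hv₀K.1

end Part1c

section Part1d

variable (hpm : IsPMapping F L p pm)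
variable (h : ∀ S : LieSubalgebra F L, IsPSub F pm S → IsPQuasiIdeal F pm S)

include hpm h in
/-- Part 1: every bracket lies in `L^{[p]}`. -/
lemma bracket_mem_Palg (x y : L) : ⁅x, y⁆ ∈ Palg F pm := by
  by_cases hall : ∀ v : L, v ∈ Palg F pm
  · exact (Palg F pm).lie_mem (hall x) (hall y)
  push_neg at hall
  obtain ⟨v₀, hv₀⟩ := hall
  -- P is an ideal
  have hPid : ∀ {w : L}, w ∈ Palg F pm → ∀ v : L, ⁅w, v⁆ ∈ (Palg F pm).toSubmodule := by
    intro w hw v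
    have hc := cf_char hpm h hv₀ hw v
    rwa [cf_eq_zero hpm h hv₀ hw, zero_smul, sub_zero] at hc
  have hPid' : ∀ {w : L}, w ∈ Palg F pm → ∀ v : L, ⁅v, w⁆ ∈ (Palg F pm).toSubmodule := by
    intro w hw v
    rw [← lie_skew]
    exact Submodule.neg_mem _ (hPid hw v)
  -- main engine: if the second coefficient is nonzero, the bracket is in P
  have main : ∀ v : L, v ∉ Palg F pm → ∀ (v' : L) (a b : F) (z₁ z₂ : L), z₁ ∈ Tv (F := F) pm v →
      z₂ ∈ Tv (F := F) pm v' → ⁅v, v'⁆ = a • v + b • v' + z₁ + z₂ → b ≠ 0 →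
      ⁅v, v'⁆ ∈ (Palg F pm).toSubmodule := by
    intro v hv v' a b z₁ z₂ hz₁ hz₂ hdec hb
    have hbase : ⁅v, v'⁆ - (a • v + b • v') ∈ (Palg F pm).toSubmodule := by
      have e : ⁅v, v'⁆ - (a • v + b • v') = z₁ + z₂ := by rw [hdec]; abel
      rw [e]
      exact Submodule.add_mem _ (Tv_le_Palg v hz₁) (Tv_le_Palg v' hz₂)
    have hiter : ∀ k : ℕ, ((LieAlgebra.ad F L v) ^ (k + 1)) v'
        - b ^ k • (a • v + b • v') ∈ (Palg F pm).toSubmodule := by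
      intro k
      induction k with
      | zero =>
        simpa [LieAlgebra.ad_apply] using hbase
      | succ k ih =>
        have e : ((LieAlgebra.ad F L v) ^ (k + 2)) v' - b ^ (k + 1) • (a • v + b • v')
            = ⁅v, ((LieAlgebra.ad F L v) ^ (k + 1)) v' - b ^ k • (a • v + b • v')⁆
              + b ^ (k + 1) • (⁅v, v'⁆ - (a • v + b • v')) := by
          rw [show k + 2 = (k + 1) + 1 by rfl, pow_succ', Module.End.mul_apply]
          simp only [lie_sub, lie_smul, lie_add, lie_self, smul_add, smul_sub, smul_smul,
            LieAlgebra.ad_apply, smul_zero, zero_add]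
          rw [pow_succ]
          module
        rw [e]
        exact Submodule.add_mem _ (hPid' ih v) (Submodule.smul_mem _ _ hbase)
    have hp1 : p - 1 + 1 = p := Nat.succ_pred_eq_of_pos (Nat.Prime.pos (Fact.out : p.Prime))
    have hfin : ((LieAlgebra.ad F L v) ^ p) v' - b ^ (p - 1) • (a • v + b • v')
        ∈ (Palg F pm).toSubmodule := by
      have h2 := hiter (p - 1)
      rwa [hp1] at h2
    have hbrP : ((LieAlgebra.ad F L v) ^ p) v' ∈ (Palg F pm).toSubmodule := by
      rw [← hpm.ad_pow]
      exact hPid (pm_mem_Palg v) v'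
    have hsc : b ^ (p - 1) • (a • v + b • v') ∈ (Palg F pm).toSubmodule := by
      have := Submodule.sub_mem _ hbrP hfin
      simpa using this
    have hav : a • v + b • v' ∈ (Palg F pm).toSubmodule := by
      have hbne : (b : F) ^ (p - 1) ≠ 0 := pow_ne_zero _ hb
      have := Submodule.smul_mem (Palg F pm).toSubmodule (b ^ (p - 1))⁻¹ hsc
      rwa [smul_smul, inv_mul_cancel₀ hbne, one_smul] at this
    have e : ⁅v, v'⁆ = (⁅v, v'⁆ - (a • v + b • v')) + (a • v + b • v') := by abel
    rw [e]
    exact Submodule.add_mem _ hbase hav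
  -- brackets of two elements outside P
  have hout : ∀ v, v ∉ Palg F pm → ∀ v', v' ∉ Palg F pm →
      ⁅v, v'⁆ ∈ (Palg F pm).toSubmodule := by
    intro v hv v' hv'
    obtain ⟨a, b, z₁, z₂, hz₁, hz₂, hdec⟩ := pair_decomp h hpm v v'
    by_cases hb : b = 0
    · obtain ⟨a', b', z₁', z₂', hz₁', hz₂', hdec'⟩ := pair_decomp h hpm v' v
      by_cases hb' : b' = 0
      · -- both secondary coefficients vanish
        by_cases hd : ∃ t : F, v' - t • v ∈ (Palg F pm).toSubmodule
        · obtain ⟨t, ht⟩ := hd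
          have e : ⁅v, v'⁆ = ⁅v, v' - t • v⁆ := by
            simp [lie_sub, lie_smul]
          rw [e]
          exact hPid' ht v
        · -- independent: show a = 0 and a' = 0
          have hsum : a • v + a' • v' ∈ (Palg F pm).toSubmodule := by
            have h1 : ⁅v, v'⁆ - a • v ∈ (Palg F pm).toSubmodule := by
              have e : ⁅v, v'⁆ - a • v = z₁ + z₂ := by rw [hdec, hb]; simp; abel
              rw [e]
              exact Submodule.add_mem _ (Tv_le_Palg v hz₁) (Tv_le_Palg v' hz₂)
            have h2 : ⁅v', v⁆ - a' • v' ∈ (Palg F pm).toSubmodule := by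
              have e : ⁅v', v⁆ - a' • v' = z₁' + z₂' := by rw [hdec', hb']; simp; abel
              rw [e]
              exact Submodule.add_mem _ (Tv_le_Palg v' hz₁') (Tv_le_Palg v hz₂')
            have := Submodule.add_mem _ h1 h2
            have e : ⁅v, v'⁆ - a • v + (⁅v', v⁆ - a' • v') = -(a • v + a' • v') := by
              rw [← lie_skew v v']
              abel
            rw [e] at this
            simpa using Submodule.neg_mem _ this
          have ha' : a' = 0 := by
            by_contra ha'ne
            refine hd ⟨-(a / a'), ?_⟩
            have := Submodule.smul_mem (Palg F pm).toSubmodule a'⁻¹ hsum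
            have e : a'⁻¹ • (a • v + a' • v') = v' - -(a / a') • v := by
              rw [smul_add, smul_smul, smul_smul, inv_mul_cancel₀ ha'ne, one_smul,
                div_eq_inv_mul, neg_smul, sub_neg_eq_add, mul_comm]
              abel
            rwa [e] at this
          have ha : a = 0 := by
            rw [ha', zero_smul, add_zero] at hsum
            by_contra hane
            refine hv ?_
            have := Submodule.smul_mem (Palg F pm).toSubmodule a⁻¹ hsum
            rwa [smul_smul, inv_mul_cancel₀ hane, one_smul] at this
          have e : ⁅v, v'⁆ = z₁ + z₂ := by rw [hdec, hb, ha]; simp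
          rw [e]
          exact Submodule.add_mem _ (Tv_le_Palg v hz₁) (Tv_le_Palg v' hz₂)
      · have := main v' hv' v a' b' z₁' z₂' hz₁' hz₂' hdec' hb'
        rw [← lie_skew]
        exact Submodule.neg_mem _ this
    · exact main v hv v' a b z₁ z₂ hz₁ hz₂ hdec hb
  -- finish by cases
  by_cases hx : x ∈ Palg F pm
  · exact hPid hx y
  by_cases hy : y ∈ Palg F pm
  · exact hPid' hy x
  exact hout x hx y hy

end Part1d

section Part23

open LieModule

lemma lie_mem_lcs_succ {k : ℕ} (x : L) {m : L} (hm : m ∈ lowerCentralSeries F L L k) :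
    ⁅x, m⁆ ∈ lowerCentralSeries F L L (k + 1) := by
  rw [LieModule.lowerCentralSeries_succ]
  exact LieSubmodule.lie_mem_lie (LieSubmodule.mem_top x) hm

lemma lcs_succ_le {k : ℕ} :
    lowerCentralSeries F L L (k + 1) ≤ lowerCentralSeries F L L k :=
  antitone_lowerCentralSeries F L L (Nat.le_succ k)

lemma ad_iter_lcs_succ (v : L) {k : ℕ} {z : L} (hz : z ∈ lowerCentralSeries F L L k)
    (m : ℕ) : ((LieAlgebra.ad F L v) ^ (m + 1)) z ∈ lowerCentralSeries F L L (k + 1) := by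
  induction m with
  | zero =>
    simpa [LieAlgebra.ad_apply] using lie_mem_lcs_succ v hz
  | succ m ih =>
    have e : ((LieAlgebra.ad F L v) ^ (m + 2)) z
        = ⁅v, ((LieAlgebra.ad F L v) ^ (m + 1)) z⁆ := by
      rw [show m + 2 = (m + 1) + 1 from rfl, pow_succ', Module.End.mul_apply,
        LieAlgebra.ad_apply]
    rw [e]
    exact lcs_succ_le (lie_mem_lcs_succ v ih)

lemma ad_pow_mem_lcs (z u : L) (n : ℕ) :
    ((LieAlgebra.ad F L z) ^ n) u ∈ lowerCentralSeries F L L n := by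
  induction n with
  | zero => simp
  | succ n ih =>
    have e : ((LieAlgebra.ad F L z) ^ (n + 1)) u
        = ⁅z, ((LieAlgebra.ad F L z) ^ n) u⁆ := by
      rw [pow_succ', Module.End.mul_apply, LieAlgebra.ad_apply]
    rw [e]
    exact lie_mem_lcs_succ z ih

lemma Tv_bracket_self (hpm : IsPMapping F L p pm) (v : L) {z : L}
    (hz : z ∈ Tv (F := F) pm v) : ⁅z, v⁆ = 0 := by
  induction hz using Submodule.span_induction with
  | mem a ha =>
    obtain ⟨k, rfl⟩ := ha
    exact bracket_pm_iter_self hpm v (k + 1)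
  | zero => simp
  | add a b _ _ iha ihb => rw [add_lie, iha, ihb, add_zero]
  | smul t a _ iha => rw [smul_lie, iha, smul_zero]

lemma Tv_bracket_reduce (hpm : IsPMapping F L p pm) {k : ℕ}
    (IH : ∀ a b : L, ⁅a, ⁅a, b⁆⁆ ∈ lowerCentralSeries F L L k)
    (u x : L) {z : L} (hz : z ∈ Tv (F := F) pm u) :
    ∃ s : F, ⁅z, x⁆ - s • ((LieAlgebra.ad F L u) ^ p) x
      ∈ lowerCentralSeries F L L (k + 1) := by
  have hD : ((LieAlgebra.ad F L u) ^ 2) x = ⁅u, ⁅u, x⁆⁆ := by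
    rw [pow_two, Module.End.mul_apply, LieAlgebra.ad_apply, LieAlgebra.ad_apply]
  induction hz using Submodule.span_induction with
  | mem a ha =>
    obtain ⟨i, rfl⟩ := ha
    cases i with
    | zero =>
      refine ⟨1, ?_⟩
      have e : ⁅pm^[0 + 1] u, x⁆ = ((LieAlgebra.ad F L u) ^ p) x := hpm.ad_pow u x
      rw [e, one_smul, sub_self]
      exact zero_mem _
    | succ i =>
      refine ⟨0, ?_⟩
      rw [zero_smul, sub_zero]
      have e : ⁅pm^[i + 1 + 1] u, x⁆ = ((LieAlgebra.ad F L u) ^ (p ^ (i + 2))) x := by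
        rw [← ad_pm_iter hpm u (i + 2)]
        rfl
      rw [e]
      have h4 : 4 ≤ p ^ (i + 2) := by
        calc 4 = 2 ^ 2 := by norm_num
        _ ≤ p ^ 2 := Nat.pow_le_pow_left (Nat.Prime.two_le Fact.out) 2
        _ ≤ p ^ (i + 2) := Nat.pow_le_pow_right (Nat.Prime.one_le Fact.out) (by omega)
      have hsplit : p ^ (i + 2) = (p ^ (i + 2) - 3 + 1) + 2 := by omega
      rw [hsplit, pow_add, Module.End.mul_apply, hD]
      exact ad_iter_lcs_succ u (IH u x) _
  | zero => exact ⟨0, by simpa using zero_mem _⟩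
  | add a b _ _ iha ihb =>
    obtain ⟨s₁, hs₁⟩ := iha
    obtain ⟨s₂, hs₂⟩ := ihb
    refine ⟨s₁ + s₂, ?_⟩
    have e : ⁅a + b, x⁆ - (s₁ + s₂) • ((LieAlgebra.ad F L u) ^ p) x
        = (⁅a, x⁆ - s₁ • ((LieAlgebra.ad F L u) ^ p) x)
          + (⁅b, x⁆ - s₂ • ((LieAlgebra.ad F L u) ^ p) x) := by
      rw [add_lie, add_smul]; abel
    rw [e]
    exact add_mem hs₁ hs₂
  | smul t a _ iha =>
    obtain ⟨s₁, hs₁⟩ := iha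
    refine ⟨t * s₁, ?_⟩
    have e : ⁅t • a, x⁆ - (t * s₁) • ((LieAlgebra.ad F L u) ^ p) x
        = t • (⁅a, x⁆ - s₁ • ((LieAlgebra.ad F L u) ^ p) x) := by
      rw [smul_lie, mul_smul, smul_sub]
    rw [e]
    exact Submodule.smul_mem _ _ hs₁

end Part23

section Part2

open LieModule

variable (hpm : IsPMapping F L p pm)
variable (h : ∀ S : LieSubalgebra F L, IsPSub F pm S → IsPQuasiIdeal F pm S)

include hpm h in
lemma mem_Palg_of_mem_lcs_one {m : L} (hm : m ∈ lowerCentralSeries F L L 1) :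
    m ∈ Palg F pm := by
  have h1 : lowerCentralSeries F L L 1 = ⁅(⊤ : LieIdeal F L), (⊤ : LieSubmodule F L L)⁆ := by
    rw [show (1 : ℕ) = 0 + 1 from rfl, LieModule.lowerCentralSeries_succ,
      LieModule.lowerCentralSeries_zero]
  rw [h1] at hm
  have hspan := LieSubmodule.lieIdeal_oper_eq_linear_span' (R := F) (L := L) (M := L)
    (I := (⊤ : LieIdeal F L)) (N := (⊤ : LieSubmodule F L L))
  have hm2 : m ∈ Submodule.span F {m : L | ∃ x ∈ (⊤ : LieIdeal F L),
      ∃ n ∈ (⊤ : LieSubmodule F L L), ⁅x, n⁆ = m} := by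
    rw [← hspan]
    exact hm
  have hle : Submodule.span F {m : L | ∃ x ∈ (⊤ : LieIdeal F L),
      ∃ n ∈ (⊤ : LieSubmodule F L L), ⁅x, n⁆ = m} ≤ (Palg F pm).toSubmodule := by
    rw [Submodule.span_le]
    rintro m' ⟨x, -, n, -, rfl⟩
    exact bracket_mem_Palg hpm h x n
  exact hle hm2

/-- Elements whose bracket with everything lands in `lcs p`. -/
def Qalg (F : Type*) [Field F] {L : Type*} [LieRing L] [LieAlgebra F L] (p : ℕ) :
    LieSubalgebra F L where
  carrier := {w | ∀ u : L, ⁅w, u⁆ ∈ lowerCentralSeries F L L p}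
  zero_mem' := fun u => by rw [zero_lie]; exact zero_mem _
  add_mem' := fun ha hb u => by
    rw [add_lie]; exact add_mem (ha u) (hb u)
  smul_mem' := fun t z hz u => by
    rw [smul_lie]; exact Submodule.smul_mem _ _ (hz u)
  lie_mem' := fun {a b} ha hb u => by
    rw [lie_lie]
    exact sub_mem ((lowerCentralSeries F L L p).lie_mem (hb u))
      ((lowerCentralSeries F L L p).lie_mem (ha u))

lemma mem_Qalg {w : L} :
    w ∈ Qalg F (L := L) p ↔ ∀ u : L, ⁅w, u⁆ ∈ lowerCentralSeries F L L p := Iff.rfl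

include hpm in
lemma Palg_le_Qalg : Palg F pm ≤ Qalg F (L := L) p := by
  apply Palg_le
  · intro z _
    rw [mem_Qalg]
    intro u
    rw [hpm.ad_pow]
    exact ad_pow_mem_lcs z u p
  · rintro _ ⟨z, rfl⟩
    rw [SetLike.mem_coe, mem_Qalg]
    intro u
    rw [hpm.ad_pow]
    exact ad_pow_mem_lcs z u p

include hpm h in
lemma part2 : lowerCentralSeries F L L 2 = lowerCentralSeries F L L p := by
  apply le_antisymm
  · rw [show (2 : ℕ) = 1 + 1 from rfl, LieModule.lowerCentralSeries_succ]
    rw [LieSubmodule.lie_le_iff]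
    intro x _ m hm
    have hmP : m ∈ Palg F pm := mem_Palg_of_mem_lcs_one hpm h hm
    have hq : ∀ u : L, ⁅m, u⁆ ∈ lowerCentralSeries F L L p :=
      (mem_Qalg).mp (Palg_le_Qalg hpm hmP)
    rw [← lie_skew]
    exact neg_mem (hq x)
  · exact antitone_lowerCentralSeries F L L (Nat.Prime.two_le (Fact.out : p.Prime))

end Part2

section Part3

open LieModule

lemma lcs_cancel {j : ℕ} {c : F} (hc : c ≠ 0) {w : L}
    (hw : c • w ∈ lowerCentralSeries F L L j) : w ∈ lowerCentralSeries F L L j := by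
  have h2 := Submodule.smul_mem ((lowerCentralSeries F L L j) :
    LieSubmodule F L L).toSubmodule c⁻¹ hw
  rwa [smul_smul, inv_mul_cancel₀ hc, one_smul] at h2

lemma ad_sq_apply (w y : L) : ((LieAlgebra.ad F L w) ^ 2) y = ⁅w, ⁅w, y⁆⁆ := by
  rw [pow_two, Module.End.mul_apply, LieAlgebra.ad_apply, LieAlgebra.ad_apply]

variable (hpm : IsPMapping F L p pm)
variable (h : ∀ S : LieSubalgebra F L, IsPSub F pm S → IsPQuasiIdeal F pm S)

include hpm h in
/-- The key Engel-type statement: double brackets lie in every term of the lower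
central series. -/
lemma engel2 (k : ℕ) : ∀ x u : L, ⁅x, ⁅x, u⁆⁆ ∈ lowerCentralSeries F L L k := by
  induction k with
  | zero => intro x u; exact LieSubmodule.mem_top _
  | succ k IH =>
    intro x u
    by_cases hm : ⁅x, u⁆ ∈ lowerCentralSeries F L L k
    · exact lie_mem_lcs_succ x hm
    obtain ⟨a, b, z₁, z₂, hz₁, hz₂, hdec⟩ := pair_decomp h hpm x u
    have hγk : ⁅x, ⁅x, u⁆⁆ ∈ lowerCentralSeries F L L k := IH x u
    have hδk : ⁅u, ⁅u, x⁆⁆ ∈ lowerCentralSeries F L L k := IH u x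
    obtain ⟨s, hs⟩ := Tv_bracket_reduce hpm IH u x hz₂
    -- The first relation: γ = b•⁅x,u⁆ - ⁅z₂,x⁆
    have hz₁0 : ⁅z₁, x⁆ = 0 := Tv_bracket_self hpm x hz₁
    have hR1 : ⁅x, ⁅x, u⁆⁆ = b • ⁅x, u⁆ - ⁅z₂, x⁆ := by
      have hmx : ⁅(⁅x, u⁆ : L), x⁆ = b • ⁅u, x⁆ + ⁅z₂, x⁆ := by
        conv_lhs => rw [hdec]
        simp only [add_lie, smul_lie, lie_self, smul_zero, hz₁0, add_zero, zero_add]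
      calc ⁅x, ⁅x, u⁆⁆ = -⁅(⁅x, u⁆ : L), x⁆ := by rw [lie_skew]
        _ = -(b • ⁅u, x⁆ + ⁅z₂, x⁆) := by rw [hmx]
        _ = b • ⁅x, u⁆ - ⁅z₂, x⁆ := by rw [← lie_skew u x]; module
    by_cases hp2 : p = 2
    · -- characteristic 2 case
      haveI hchar2 : CharP F 2 := by rw [← hp2]; infer_instance
      have h2F : (2 : F) = 0 := CharP.cast_eq_zero F 2
      clear hchar2
      have hadu : ((LieAlgebra.ad F L u) ^ p) x = ⁅u, ⁅u, x⁆⁆ := by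
        rw [hp2]; exact ad_sq_apply u x
      rw [hadu] at hs
      -- (I0) : γ - b•⁅x,u⁆ + s•δ ∈ lcs (k+1)
      have hI0 : ⁅x, ⁅x, u⁆⁆ - b • ⁅x, u⁆ + s • ⁅u, ⁅u, x⁆⁆
          ∈ lowerCentralSeries F L L (k + 1) := by
        have e : ⁅x, ⁅x, u⁆⁆ - b • ⁅x, u⁆ + s • ⁅u, ⁅u, x⁆⁆
            = -(⁅z₂, x⁆ - s • ⁅u, ⁅u, x⁆⁆) := by rw [hR1]; module
        rw [e]
        exact neg_mem hs
      -- kill b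
      have hb0 : b = 0 := by
        by_contra hb
        refine hm (lcs_cancel hb ?_)
        have e : b • ⁅x, u⁆ = ⁅x, ⁅x, u⁆⁆ + s • ⁅u, ⁅u, x⁆⁆
            - (⁅x, ⁅x, u⁆⁆ - b • ⁅x, u⁆ + s • ⁅u, ⁅u, x⁆⁆) := by module
        rw [e]
        exact sub_mem (add_mem hγk (Submodule.smul_mem _ _ hδk)) (lcs_succ_le hI0)
      -- (I) : γ + s•δ ∈ lcs (k+1)
      have hI : ⁅x, ⁅x, u⁆⁆ + s • ⁅u, ⁅u, x⁆⁆ ∈ lowerCentralSeries F L L (k + 1) := by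
        have h' := hI0
        rw [hb0, zero_smul, sub_zero] at h'
        exact h'
      -- mirror relation
      obtain ⟨t, ht⟩ := Tv_bracket_reduce hpm IH x u hz₁
      have hadx : ((LieAlgebra.ad F L x) ^ p) u = ⁅x, ⁅x, u⁆⁆ := by
        rw [hp2]; exact ad_sq_apply x u
      rw [hadx] at ht
      have hz₂0 : ⁅z₂, u⁆ = 0 := Tv_bracket_self hpm u hz₂
      have hR2 : ⁅u, ⁅u, x⁆⁆ = a • ⁅x, u⁆ + ⁅z₁, u⁆ := by
        have hmu : ⁅(⁅x, u⁆ : L), u⁆ = a • ⁅x, u⁆ + ⁅z₁, u⁆ := by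
          conv_lhs => rw [hdec]
          simp only [add_lie, smul_lie, lie_self, smul_zero, hz₂0, add_zero, zero_add]
        calc ⁅u, ⁅u, x⁆⁆ = ⁅(⁅x, u⁆ : L), u⁆ := by
              rw [← lie_skew u x, lie_neg, ← lie_skew u ⁅x, u⁆, neg_neg]
          _ = a • ⁅x, u⁆ + ⁅z₁, u⁆ := hmu
      -- kill a
      have ha0 : a = 0 := by
        by_contra ha
        refine hm (lcs_cancel ha ?_)
        have e : a • ⁅x, u⁆ = ⁅u, ⁅u, x⁆⁆ - t • ⁅x, ⁅x, u⁆⁆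
            - (⁅z₁, u⁆ - t • ⁅x, ⁅x, u⁆⁆) := by rw [hR2]; module
        rw [e]
        exact sub_mem (sub_mem hδk (Submodule.smul_mem _ _ hγk)) (lcs_succ_le ht)
      -- (II) : δ - t•γ ∈ lcs (k+1)
      have hII : ⁅u, ⁅u, x⁆⁆ - t • ⁅x, ⁅x, u⁆⁆ ∈ lowerCentralSeries F L L (k + 1) := by
        have e : ⁅u, ⁅u, x⁆⁆ - t • ⁅x, ⁅x, u⁆⁆ = ⁅z₁, u⁆ - t • ⁅x, ⁅x, u⁆⁆ := by
          rw [hR2, ha0, zero_smul, zero_add]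
        rw [e]
        exact ht
      -- combine: (1 + s*t) • γ ∈ lcs (k+1)
      have hC : (1 + s * t) • ⁅x, ⁅x, u⁆⁆ ∈ lowerCentralSeries F L L (k + 1) := by
        have e : (1 + s * t) • ⁅x, ⁅x, u⁆⁆
            = (⁅x, ⁅x, u⁆⁆ + s • ⁅u, ⁅u, x⁆⁆) - s • (⁅u, ⁅u, x⁆⁆ - t • ⁅x, ⁅x, u⁆⁆) := by
          module
        rw [e]
        exact sub_mem hI (Submodule.smul_mem _ _ hII)
      by_cases hst : 1 + s * t = 0
      · -- the pencil trick
        have hsne : s ≠ 0 := by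
          intro h0
          rw [h0, zero_mul, add_zero] at hst
          exact one_ne_zero hst
        have hst' : s * t = -1 := by linear_combination hst
        have e1 : ⁅u, x⁆ = -⁅x, u⁆ := by rw [← lie_skew u x]
        have e2 : ⁅u, ⁅x, u⁆⁆ = -⁅u, ⁅u, x⁆⁆ := by rw [e1, lie_neg, neg_neg]
        have hvx : ⁅x + s • u, x⁆ = -(s • ⁅x, u⁆) := by
          rw [add_lie, lie_self, smul_lie, e1]
          module
        -- (V) : ⁅x + s•u, ⁅x + s•u, x⁆⁆ ∈ lcs (k+1)
        have hV : ⁅x + s • u, ⁅x + s • u, x⁆⁆ ∈ lowerCentralSeries F L L (k + 1) := by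
          have e3 : ⁅x + s • u, ⁅x + s • u, x⁆⁆
              = -(s • (⁅x, ⁅x, u⁆⁆ - s • ⁅u, ⁅u, x⁆⁆)) := by
            rw [hvx]
            rw [lie_neg, lie_smul, add_lie, smul_lie, e2]
            module
          have e : ⁅x + s • u, ⁅x + s • u, x⁆⁆
              = (-s + s ^ 2 * t) • ⁅x, ⁅x, u⁆⁆ + s ^ 2 • (⁅u, ⁅u, x⁆⁆ - t • ⁅x, ⁅x, u⁆⁆) := by
            rw [e3]
            module
          have hcoef : -s + s ^ 2 * t = 0 := by
            have e4 : -s + s ^ 2 * t = -(2 * s) := by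
              rw [pow_two, mul_assoc, hst']
              ring
            rw [e4, h2F]
            ring
          rw [e, hcoef, zero_smul, zero_add]
          exact Submodule.smul_mem _ _ hII
        obtain ⟨lam, kap, w₁, w₂, hw₁, hw₂, hdec2⟩ := pair_decomp h hpm (x + s • u) x
        obtain ⟨g, hg⟩ := Tv_bracket_reduce hpm IH (x + s • u) x hw₁
        have hadv : ((LieAlgebra.ad F L (x + s • u)) ^ p) x = ⁅x + s • u, ⁅x + s • u, x⁆⁆ := by
          rw [hp2]; exact ad_sq_apply _ x
        rw [hadv] at hg
        have hw₁x : ⁅w₁, x⁆ ∈ lowerCentralSeries F L L (k + 1) := by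
          have e : ⁅w₁, x⁆ = (⁅w₁, x⁆ - g • ⁅x + s • u, ⁅x + s • u, x⁆⁆)
              + g • ⁅x + s • u, ⁅x + s • u, x⁆⁆ := by module
          rw [e]
          exact add_mem hg (Submodule.smul_mem _ _ hV)
        have hw₂0 : ⁅w₂, x⁆ = 0 := Tv_bracket_self hpm x hw₂
        have hkey : s • ⁅x, ⁅x, u⁆⁆ + (lam * s) • ⁅x, u⁆
            ∈ lowerCentralSeries F L L (k + 1) := by
          have hbr : ⁅(⁅x + s • u, x⁆ : L), x⁆ = lam • ⁅x + s • u, x⁆ + ⁅w₁, x⁆ := by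
            conv_lhs => rw [hdec2]
            simp only [add_lie, smul_lie, lie_self, smul_zero, hw₂0, add_zero, zero_add]
          rw [hvx] at hbr
          -- hbr : ⁅-(s•⁅x,u⁆), x⁆ = lam • (-(s•⁅x,u⁆)) + ⁅w₁, x⁆
          have e : s • ⁅x, ⁅x, u⁆⁆ + (lam * s) • ⁅x, u⁆ = ⁅w₁, x⁆ := by
            have e1 : ⁅(-(s • ⁅x, u⁆) : L), x⁆ = -(s • ⁅(⁅x, u⁆ : L), x⁆) := by
              rw [neg_lie, smul_lie]
            have e2 : ⁅(⁅x, u⁆ : L), x⁆ = -⁅x, ⁅x, u⁆⁆ := by rw [lie_skew]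
            rw [e1, e2] at hbr
            calc s • ⁅x, ⁅x, u⁆⁆ + (lam * s) • ⁅x, u⁆
                = -(s • -⁅x, ⁅x, u⁆⁆) - lam • -(s • ⁅x, u⁆) := by module
              _ = ⁅w₁, x⁆ := by rw [hbr]; abel
          rw [e]
          exact hw₁x
        have hlam : lam * s = 0 := by
          by_contra hls
          refine hm (lcs_cancel hls ?_)
          have e : (lam * s) • ⁅x, u⁆
              = (s • ⁅x, ⁅x, u⁆⁆ + (lam * s) • ⁅x, u⁆) - s • ⁅x, ⁅x, u⁆⁆ := by module
          rw [e]
          exact sub_mem (lcs_succ_le hkey) (Submodule.smul_mem _ _ hγk)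
        refine lcs_cancel hsne ?_
        have e : s • ⁅x, ⁅x, u⁆⁆ = s • ⁅x, ⁅x, u⁆⁆ + (lam * s) • ⁅x, u⁆ := by
          rw [hlam, zero_smul, add_zero]
        rw [e]
        exact hkey
      · -- 1 + s*t is invertible
        exact lcs_cancel hst hC
    · -- p ≥ 3 case
      have hp3 : 3 ≤ p := by
        have h2 := Nat.Prime.two_le (Fact.out : p.Prime)
        omega
      have hDp : ((LieAlgebra.ad F L u) ^ p) x ∈ lowerCentralSeries F L L (k + 1) := by
        have hsplit : p = (p - 3 + 1) + 2 := by omega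
        rw [hsplit, pow_add, Module.End.mul_apply, ad_sq_apply]
        exact ad_iter_lcs_succ u hδk _
      have hz₂x : ⁅z₂, x⁆ ∈ lowerCentralSeries F L L (k + 1) := by
        have e : ⁅z₂, x⁆ = (⁅z₂, x⁆ - s • ((LieAlgebra.ad F L u) ^ p) x)
            + s • ((LieAlgebra.ad F L u) ^ p) x := by module
        rw [e]
        exact add_mem hs (Submodule.smul_mem _ _ hDp)
      have hb0 : b = 0 := by
        by_contra hb
        refine hm (lcs_cancel hb ?_)
        have e : b • ⁅x, u⁆ = ⁅x, ⁅x, u⁆⁆ + ⁅z₂, x⁆ := by rw [hR1]; module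
        rw [e]
        exact add_mem hγk (lcs_succ_le hz₂x)
      rw [hR1, hb0, zero_smul, zero_sub]
      exact neg_mem hz₂x

end Part3

/-- The centre of `L`, as a Lie subalgebra. -/
def ZAlg (F : Type*) [Field F] (L : Type*) [LieRing L] [LieAlgebra F L] :
    LieSubalgebra F L where
  carrier := {z | ∀ y : L, ⁅z, y⁆ = 0}
  zero_mem' := fun y => zero_lie y
  add_mem' := fun {a b} ha hb y => by rw [add_lie, ha y, hb y, add_zero]
  smul_mem' := fun t z hz y => by rw [smul_lie, hz y, smul_zero]
  lie_mem' := fun {a b} ha hb => by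
    intro y
    have ha' : ∀ y : L, ⁅a, y⁆ = 0 := ha
    have hb' : ∀ y : L, ⁅b, y⁆ = 0 := hb
    simp [lie_lie, ha', hb']

section Part3b

open LieModule

variable (hpm : IsPMapping F L p pm)
variable (h : ∀ S : LieSubalgebra F L, IsPSub F pm S → IsPQuasiIdeal F pm S)

include hpm h in
lemma part3 (hn : LieModule.IsNilpotent L L) : lowerCentralSeries F L L 2 = ⊥ := by
  obtain ⟨n, hn⟩ := (LieModule.isNilpotent_iff F L L).mp hn
  have hEngel : ∀ x u : L, ⁅x, ⁅x, u⁆⁆ = 0 := by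
    intro x u
    have hmem := engel2 hpm h n x u
    rw [hn] at hmem
    simpa using hmem
  have hcent : ∀ z y : L, ⁅pm z, y⁆ = 0 := by
    intro z y
    rw [hpm.ad_pow]
    have hsplit : p = (p - 2) + 2 :=
      (Nat.sub_add_cancel (Nat.Prime.two_le (Fact.out : p.Prime))).symm
    rw [hsplit, pow_add, Module.End.mul_apply, ad_sq_apply, hEngel, map_zero]
  have hPZ : Palg F pm ≤ ZAlg F L := by
    apply Palg_le
    · intro z _
      exact fun y => hcent z y
    · rintro _ ⟨z, rfl⟩
      exact fun y => hcent z y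
  rw [show (2 : ℕ) = 1 + 1 from rfl, LieModule.lowerCentralSeries_succ]
  rw [eq_bot_iff, LieSubmodule.lie_le_iff]
  intro x _ m hm
  have hmP : m ∈ Palg F pm := mem_Palg_of_mem_lcs_one hpm h hm
  have hmZ : ∀ y : L, ⁅m, y⁆ = 0 := hPZ hmP
  rw [LieSubmodule.mem_bot, ← lie_skew, hmZ x, neg_zero]

end Part3b

end Aux





/-- if every restricted subalgebra of `L` is a restricted quasi-ideal, then
`[L,L] ⊆ L^[p]` and `L^3 = L^{p+1}`; in particular if `L` is nilpotent it has class at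
most `2`. -/
theorem derived_le_pPower_of_all_quasiIdeal
    (F : Type*) [Field F] (L : Type*) [LieRing L] [LieAlgebra F L]
    [FiniteDimensional F L] (p : ℕ) [Fact p.Prime] [CharP F p]
    (pm : L → L) (hpm : IsPMapping F L p pm)
    (h : ∀ S : LieSubalgebra F L, IsPSub F pm S → IsPQuasiIdeal F pm S) :
    (∀ x y : L, ⁅x, y⁆ ∈ pSpan F pm (Set.range pm)) ∧
      LieModule.lowerCentralSeries F L L 2 = LieModule.lowerCentralSeries F L L p ∧
      (LieModule.IsNilpotent L L → LieModule.lowerCentralSeries F L L 2 = ⊥) := by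
  exact ⟨fun x y => bracket_mem_Palg hpm h x y, part2 hpm h, fun hn => part3 hpm h hn⟩
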